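/- arXiv:1602.02543 — 2 statements merged into one kernel-verified Lean document; each statement's English description precedes it below -/
import Mathlib

section
/- Suppose ℓ ≥ 2 and let Z = [A] be an asymmetric hard partition of m data points with ℓ clusters. Then √2 ≤ α_Z ≤ 2·√(⌈m/ℓ⌉), where ⌈x⌉ denotes the smallest integer greater than or equal to x. -/
open scoped BigOperators
open MeasureTheory

noncomputable section

/-- Matrices as points of the Euclidean space `ℝ^{ℓ×m}` with the Frobenius norm. -/
abbrev Mat (l m : ℕ) := EuclideanSpace ℝ (Fin l × Fin m)

/-- `A` is a representation matrix: entries in `[0,1]` and each column sums to `1`. -/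
def IsRep {l m : ℕ} (A : Mat l m) : Prop :=
  (∀ p, 0 ≤ A p ∧ A p ≤ 1) ∧ ∀ j : Fin m, ∑ k : Fin l, A (k, j) = 1

/-- The representation space `𝒳`. -/
abbrev RepSpace (l m : ℕ) := {A : Mat l m // IsRep A}

/-- Action of a permutation on a matrix by permuting rows. -/
def permAct {l m : ℕ} (σ : Equiv.Perm (Fin l)) (A : Mat l m) : Mat l m :=
  WithLp.toLp 2 (fun p => A (σ⁻¹ p.1, p.2))

lemma isRep_permAct {l m : ℕ} (σ : Equiv.Perm (Fin l)) {A : Mat l m} (hA : IsRep A) :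
    IsRep (permAct σ A) := by
  refine ⟨fun p => hA.1 (σ⁻¹ p.1, p.2), fun j => ?_⟩
  have h := Equiv.sum_comp σ⁻¹ (fun k => A (k, j))
  simpa [permAct] using h.trans (hA.2 j)

instance {l m : ℕ} : SMul (Equiv.Perm (Fin l)) (RepSpace l m) :=
  ⟨fun σ A => ⟨permAct σ A.1, isRep_permAct σ A.2⟩⟩

lemma smul_rep_def {l m : ℕ} (σ : Equiv.Perm (Fin l)) (A : RepSpace l m) :
    (σ • A).1 = permAct σ A.1 := rfl

instance {l m : ℕ} : MulAction (Equiv.Perm (Fin l)) (RepSpace l m) where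
  one_smul A := Subtype.ext rfl
  mul_smul σ τ A := Subtype.ext rfl

/-- Two representation matrices are equivalent iff they lie in the same `Π`-orbit. -/
instance pSetoid (l m : ℕ) : Setoid (RepSpace l m) :=
  MulAction.orbitRel (Equiv.Perm (Fin l)) (RepSpace l m)

/-- The partition space `𝒫 = 𝒳/Π`. -/
abbrev PSpace (l m : ℕ) := Quotient (pSetoid l m)

/-- The intrinsic metric `δ` on `𝒫`: the minimal Euclidean distance between representatives. -/
def pdist {l m : ℕ} (X Y : PSpace l m) : ℝ :=
  sInf {d | ∃ A B : RepSpace l m, ⟦A⟧ = X ∧ ⟦B⟧ = Y ∧ d = dist A B}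

/-- The degree of asymmetry `α` of the partition represented by `A`:
`min {‖A - σ·A‖ : σ ≠ id}`. -/
def alpha {l m : ℕ} (A : RepSpace l m) : ℝ :=
  sInf {d | ∃ σ : Equiv.Perm (Fin l), σ ≠ 1 ∧ d = dist A (σ • A)}

/-- The closed ball in the partition space. -/
def pBall {l m : ℕ} (Z : PSpace l m) (r : ℝ) : Set (PSpace l m) :=
  {X | pdist X Z ≤ r}

/-- The metric topology on `𝒫` generated by the open balls of `δ`. -/
instance {l m : ℕ} : TopologicalSpace (PSpace l m) :=
  TopologicalSpace.generateFrom {s | ∃ (Z : PSpace l m) (r : ℝ), s = {X | pdist X Z < r}}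

instance {l m : ℕ} : MeasurableSpace (PSpace l m) := borel _

/-- `B(Z, r)` is a homogeneous ball: there is a bijective isometry onto the closed ball of
radius `r` in `𝒳` centered at a representative of `Z`. -/
def IsHomBall {l m : ℕ} (Z : PSpace l m) (r : ℝ) : Prop :=
  ∃ A : RepSpace l m, ⟦A⟧ = Z ∧
    ∃ φ : pBall Z r → {B : RepSpace l m | dist B A ≤ r},
      Function.Bijective φ ∧
        ∀ X Y : pBall Z r,
          dist (φ X : RepSpace l m) (φ Y : RepSpace l m) =
            pdist (X : PSpace l m) (Y : PSpace l m)

/-- The `k`-th row of a representation matrix, as a point of Euclidean space `ℝ^m`. -/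
def rowOf {l m : ℕ} (A : RepSpace l m) (k : Fin l) : EuclideanSpace ℝ (Fin m) :=
  WithLp.toLp 2 (fun j => A.1 (k, j))

/-- The support of a measure: the smallest closed set of full measure. -/
def msupport {l m : ℕ} (Q : Measure (PSpace l m)) : Set (PSpace l m) :=
  ⋂₀ {S | IsClosed S ∧ Q S = 1}

/-- The Dirichlet fundamental domain centered at `A`. -/
def DirDom {l m : ℕ} (A : RepSpace l m) : Set (RepSpace l m) :=
  {B | ∀ σ : Equiv.Perm (Fin l), dist B A ≤ dist B (σ • A)}

lemma dist_smul_eq {l m : ℕ} (A : RepSpace l m) (σ : Equiv.Perm (Fin l)) :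
    dist A (σ • A) = Real.sqrt (∑ p : Fin l × Fin m, (A.1 p - A.1 (σ⁻¹ p.1, p.2))^2) := by
  rw [Subtype.dist_eq, EuclideanSpace.dist_eq]
  simp [Real.dist_eq, sq_abs, smul_rep_def, permAct]

theorem stmt11 {l m : ℕ} (hl : 2 ≤ l) (hm : 1 ≤ m) (A : RepSpace l m)
    (hhard : ∀ p, A.1 p = 0 ∨ A.1 p = 1) (hasym : 0 < alpha A) :
    Real.sqrt 2 ≤ alpha A ∧ alpha A ≤ 2 * Real.sqrt ((⌈(m : ℝ) / (l : ℝ)⌉ : ℤ) : ℝ) := by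
  have hL2 : (2:ℝ) ≤ (l:ℝ) := by exact_mod_cast hl
  have hl0 : (0:ℝ) < (l:ℝ) := by linarith
  set S := {d | ∃ σ : Equiv.Perm (Fin l), σ ≠ 1 ∧ d = dist A (σ • A)} with hSdef
  have hnt : Nontrivial (Fin l) := Fin.nontrivial_iff_two_le.mpr hl
  obtain ⟨i0, i1, hne01⟩ := exists_pair_ne (Fin l)
  have hSne : S.Nonempty :=
    ⟨_, Equiv.swap i0 i1, by simp [Equiv.swap_eq_one_iff, hne01], rfl⟩
  have hSbdd : BddBelow S := ⟨0, by rintro d ⟨σ, -, rfl⟩; exact dist_nonneg⟩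
  constructor
  · -- lower bound
    apply le_csInf hSne
    rintro d ⟨σ, hσ, rfl⟩
    have hpos : 0 < dist A (σ • A) :=
      lt_of_lt_of_le hasym (csInf_le hSbdd ⟨σ, hσ, rfl⟩)
    have hneq : A ≠ σ • A := dist_pos.mp hpos
    obtain ⟨p0, hp0⟩ : ∃ p : Fin l × Fin m, A.1 p ≠ A.1 (σ⁻¹ p.1, p.2) := by
      by_contra h
      push_neg at h
      exact hneq (Subtype.ext (by ext p; exact h p))
    obtain ⟨k0, j⟩ := p0
    have hcol : ∑ k : Fin l, (A.1 (k, j) - A.1 (σ⁻¹ k, j)) = 0 := by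
      rw [Finset.sum_sub_distrib, A.2.2 j,
        Equiv.sum_comp σ⁻¹ (fun k => A.1 (k, j)), A.2.2 j, sub_self]
    obtain ⟨k1, hk1ne, hk1⟩ : ∃ k1, k1 ≠ k0 ∧ A.1 (k1, j) ≠ A.1 (σ⁻¹ k1, j) := by
      by_contra h
      push_neg at h
      have hsingle : ∑ k : Fin l, (A.1 (k, j) - A.1 (σ⁻¹ k, j))
          = A.1 (k0, j) - A.1 (σ⁻¹ k0, j) := by
        apply Finset.sum_eq_single
        · intro k _ hk
          rw [h k hk, sub_self]
        · intro hk
          exact absurd (Finset.mem_univ k0) hk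
      rw [hsingle] at hcol
      exact hp0 (by linarith [hcol])
    have hsq : ∀ k : Fin l, A.1 (k, j) ≠ A.1 (σ⁻¹ k, j) →
        (A.1 (k, j) - A.1 (σ⁻¹ k, j))^2 = 1 := by
      intro k h
      rcases hhard (k, j) with h1 | h1 <;> rcases hhard (σ⁻¹ k, j) with h2 | h2 <;>
        rw [h1, h2] at h ⊢ <;> norm_num at h <;> norm_num
    rw [dist_smul_eq]
    have h2le : (2:ℝ) ≤ ∑ p : Fin l × Fin m, (A.1 p - A.1 (σ⁻¹ p.1, p.2))^2 := by
      have hsub :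
          ∑ p ∈ ({(k0, j), (k1, j)} : Finset (Fin l × Fin m)),
              (A.1 p - A.1 (σ⁻¹ p.1, p.2))^2
            ≤ ∑ p : Fin l × Fin m, (A.1 p - A.1 (σ⁻¹ p.1, p.2))^2 :=
        Finset.sum_le_sum_of_subset_of_nonneg (Finset.subset_univ _)
          (fun p _ _ => sq_nonneg _)
      have hpair : ((k0, j) : Fin l × Fin m) ≠ (k1, j) := by
        intro h
        exact hk1ne (congrArg Prod.fst h).symm
      rw [Finset.sum_pair hpair] at hsub
      have e0 := hsq k0 hp0
      have e1 := hsq k1 hk1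
      simp only at hsub
      linarith [hsub, e0, e1]
    exact Real.sqrt_le_sqrt h2le
  · -- upper bound
    set n : Fin l → ℝ := fun k => ∑ j, A.1 (k, j) with hn
    have hsumn : ∑ k, n k = (m:ℝ) := by
      simp only [hn]
      rw [Finset.sum_comm]
      simp [A.2.2]
    obtain ⟨a, -, ha⟩ := Finset.univ.exists_min_image n ⟨i0, Finset.mem_univ _⟩
    obtain ⟨c, hc⟩ := exists_ne a
    obtain ⟨b, hb, hbmin⟩ := (Finset.univ.erase a).exists_min_image n
      ⟨c, Finset.mem_erase.2 ⟨hc, Finset.mem_univ _⟩⟩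
    have hab : b ≠ a := (Finset.mem_erase.1 hb).1
    -- n a ≤ m / l
    have h1 : (l:ℝ) * n a ≤ (m:ℝ) := by
      have := Finset.card_nsmul_le_sum Finset.univ n (n a)
        (fun k _ => ha k (Finset.mem_univ _))
      rw [hsumn] at this
      simpa [nsmul_eq_mul, mul_comm] using this
    -- (l-1) * n b ≤ m - n a
    have h2 : ((l:ℝ) - 1) * n b ≤ (m:ℝ) - n a := by
      have hsum' : ∑ k ∈ Finset.univ.erase a, n k = (m:ℝ) - n a := by
        rw [Finset.sum_erase_eq_sub (Finset.mem_univ a), hsumn]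
      have := Finset.card_nsmul_le_sum (Finset.univ.erase a) n (n b) hbmin
      rw [hsum', Finset.card_erase_of_mem (Finset.mem_univ a), Finset.card_univ,
        Fintype.card_fin] at this
      have hcast : ((l - 1 : ℕ) : ℝ) = (l:ℝ) - 1 := by
        have : (1:ℕ) ≤ l := by omega
        push_cast [this]
        ring
      calc ((l:ℝ) - 1) * n b = ((l - 1 : ℕ) : ℝ) * n b := by rw [hcast]
        _ = (l - 1 : ℕ) • n b := (nsmul_eq_mul _ _).symm
        _ ≤ (m:ℝ) - n a := this
    -- key averaging inequality
    have key : n a + n b ≤ 2 * (m:ℝ) / (l:ℝ) := by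
      rw [le_div_iff₀ hl0]
      nlinarith [h1, h2, mul_le_mul_of_nonneg_left h1 (by linarith : (0:ℝ) ≤ (l:ℝ) - 2),
        mul_le_mul_of_nonneg_left h2 (by linarith : (0:ℝ) ≤ (l:ℝ))]
    set C : ℝ := ((⌈(m : ℝ) / (l : ℝ)⌉ : ℤ) : ℝ) with hC
    have hceil : (m:ℝ) / (l:ℝ) ≤ C := Int.le_ceil _
    have hC0 : 0 ≤ C := le_trans (by positivity) hceil
    -- the transposition swapping rows a and b
    set σ : Equiv.Perm (Fin l) := Equiv.swap a b with hσ
    have hσne : σ ≠ 1 := by simp [hσ, Equiv.swap_eq_one_iff, hab.symm]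
    have hmem : dist A (σ • A) ∈ S := ⟨σ, hσne, rfl⟩
    have hle : alpha A ≤ dist A (σ • A) := csInf_le hSbdd hmem
    -- bound the distance
    have hsqle : ∀ x y : ℝ, (x = 0 ∨ x = 1) → (y = 0 ∨ y = 1) →
        (x - y)^2 ≤ x + y := by
      rintro x y (rfl | rfl) (rfl | rfl) <;> norm_num
    have hdistle : dist A (σ • A) ≤ 2 * Real.sqrt C := by
      rw [dist_smul_eq]
      have hsum : ∑ p : Fin l × Fin m, (A.1 p - A.1 (σ⁻¹ p.1, p.2))^2 ≤ 4 * C := by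
        have hinv : σ⁻¹ = σ := by rw [hσ, Equiv.swap_inv]
        rw [hinv, Fintype.sum_prod_type]
        have hsubset : ({a, b} : Finset (Fin l)) ⊆ Finset.univ := Finset.subset_univ _
        have hzero : ∀ k ∈ Finset.univ, k ∉ ({a, b} : Finset (Fin l)) →
            ∑ j : Fin m, (A.1 (k, j) - A.1 (σ k, j))^2 = 0 := by
          intro k _ hk
          simp only [Finset.mem_insert, Finset.mem_singleton] at hk
          push_neg at hk
          rw [hσ]
          refine Finset.sum_eq_zero fun j _ => ?_
          rw [Equiv.swap_apply_of_ne_of_ne hk.1 hk.2, sub_self]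
          norm_num
        rw [← Finset.sum_subset hsubset hzero,
          Finset.sum_pair (fun h => hab h.symm)]
        have hA : σ a = b := Equiv.swap_apply_left a b
        have hB : σ b = a := Equiv.swap_apply_right a b
        rw [hA, hB]
        have hba : ∑ j : Fin m, (A.1 (b, j) - A.1 (a, j))^2
            = ∑ j : Fin m, (A.1 (a, j) - A.1 (b, j))^2 := by
          apply Finset.sum_congr rfl
          intro j _
          ring
        rw [hba]
        have hbound : ∑ j : Fin m, (A.1 (a, j) - A.1 (b, j))^2 ≤ n a + n b := by
          have : ∑ j : Fin m, (A.1 (a, j) - A.1 (b, j))^2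
              ≤ ∑ j : Fin m, (A.1 (a, j) + A.1 (b, j)) :=
            Finset.sum_le_sum (fun j _ => hsqle _ _ (hhard (a, j)) (hhard (b, j)))
          rwa [Finset.sum_add_distrib] at this
        have h4 : n a + n b ≤ 2 * C := by
          calc n a + n b ≤ 2 * (m:ℝ) / (l:ℝ) := key
            _ = 2 * ((m:ℝ) / (l:ℝ)) := by ring
            _ ≤ 2 * C := by linarith
        linarith
      calc Real.sqrt (∑ p : Fin l × Fin m, (A.1 p - A.1 (σ⁻¹ p.1, p.2))^2)
          ≤ Real.sqrt (4 * C) := Real.sqrt_le_sqrt hsum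
        _ = Real.sqrt 4 * Real.sqrt C := Real.sqrt_mul (by norm_num) _
        _ = 2 * Real.sqrt C := by
            rw [show (4:ℝ) = 2^2 by norm_num, Real.sqrt_sq (by norm_num : (0:ℝ) ≤ 2)]
    exact le_trans hle hdistle

end
end

section
/- Let A ∈ 𝒳 be a representative of an asymmetric partition and let D_A be the Dirichlet fundamental domain centered at A. Then every point B in the interior of D_A relative to 𝒳 represents an asymmetric partition; that is, B ≠ σ·B for every σ ∈ Π with σ ≠ id. -/
open scoped BigOperators
open MeasureTheory

noncomputable section

lemma dist_permAct_aux {l m : ℕ} (σ : Equiv.Perm (Fin l)) (X Y : Mat l m) :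
    dist (permAct σ X) (permAct σ Y) = dist X Y := by
  rw [EuclideanSpace.dist_eq, EuclideanSpace.dist_eq]
  congr 1
  simp only [Real.dist_eq, sq_abs]
  exact Equiv.sum_comp (Equiv.prodCongr σ⁻¹ (Equiv.refl (Fin m)))
    (fun q => (X q - Y q) ^ 2)

lemma isRep_combo {l m : ℕ} {X Y : Mat l m} (hX : IsRep X) (hY : IsRep Y)
    {t : ℝ} (h0 : 0 ≤ t) (h1 : t ≤ 1) : IsRep ((1 - t) • X + t • Y) := by
  constructor
  · intro p
    have hx := hX.1 p
    have hy := hY.1 p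
    have happ : ((1 - t) • X + t • Y) p = (1 - t) * X p + t * Y p := rfl
    constructor
    · rw [happ]; nlinarith [hx.1, hy.1]
    · rw [happ]; nlinarith [hx.2, hy.2]
  · intro j
    have happ : ∀ k : Fin l, ((1 - t) • X + t • Y) (k, j)
        = (1 - t) * X (k, j) + t * Y (k, j) := fun k => rfl
    calc ∑ k : Fin l, ((1 - t) • X + t • Y) (k, j)
        = ∑ k : Fin l, ((1 - t) * X (k, j) + t * Y (k, j)) := by
          exact Finset.sum_congr rfl fun k _ => happ k
      _ = (1 - t) * (∑ k : Fin l, X (k, j)) + t * (∑ k : Fin l, Y (k, j)) := by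
          rw [Finset.sum_add_distrib, Finset.mul_sum, Finset.mul_sum]
      _ = 1 := by rw [hX.2 j, hY.2 j]; ring

set_option maxHeartbeats 1000000 in
theorem stmt16 {l m : ℕ} (hl : 1 ≤ l) (hm : 1 ≤ m) (A : RepSpace l m)
    (hA : ∀ σ : Equiv.Perm (Fin l), σ ≠ 1 → σ • A ≠ A)
    (B : RepSpace l m) (hB : B ∈ interior (DirDom A)) :
    ∀ σ : Equiv.Perm (Fin l), σ ≠ 1 → σ • B ≠ B := by
  intro σ hσ hfix
  -- underlying matrices
  set a : Mat l m := A.1 with ha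
  set b : Mat l m := B.1 with hb
  set sa : Mat l m := permAct σ a with hsa
  have hfixb : permAct σ b = b := congrArg Subtype.val hfix
  set d : ℝ := dist b a with hd
  have hd0 : 0 ≤ d := dist_nonneg
  -- distances under the permutation action
  have hdist_sa_b : dist sa b = d := by
    have := dist_permAct_aux σ a b
    rw [hfixb] at this
    rw [hsa, this, hd, dist_comm]
  have hdist_b_sa : dist b sa = d := by rw [dist_comm]; exact hdist_sa_b
  -- interior gives a ball inside DirDom
  rw [mem_interior_iff_mem_nhds, Metric.mem_nhds_iff] at hB
  obtain ⟨ε, hε, hball⟩ := hB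
  -- choose the perturbation size
  set t : ℝ := min 1 (ε / (2 * (d + 1))) with ht
  have ht0 : 0 < t := by
    apply lt_min one_pos
    positivity
  have ht1 : t ≤ 1 := min_le_left _ _
  have htd : t * d < ε := by
    have h2 : t ≤ ε / (2 * (d + 1)) := min_le_right _ _
    have : t * d ≤ ε / (2 * (d + 1)) * d :=
      mul_le_mul_of_nonneg_right h2 hd0
    have hlt : ε / (2 * (d + 1)) * d < ε := by
      rw [div_mul_eq_mul_div, div_lt_iff₀ (by positivity)]
      nlinarith
    linarith
  -- the perturbed point
  have hPrep : IsRep ((1 - t) • b + t • sa) :=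
    isRep_combo B.2 (isRep_permAct σ A.2) (le_of_lt ht0) ht1
  set P : RepSpace l m := ⟨(1 - t) • b + t • sa, hPrep⟩ with hP
  -- P is in the ball around B
  have hPB : dist P B = t * d := by
    rw [Subtype.dist_eq]
    show dist ((1 - t) • b + t • sa) b = t * d
    have heq : (1 - t) • b + t • sa - b = t • (sa - b) := by module
    rw [dist_eq_norm, heq, norm_smul, Real.norm_eq_abs, abs_of_pos ht0,
      ← dist_eq_norm, hdist_sa_b]
  have hPdom : P ∈ DirDom A := hball (by
    simp only [Metric.mem_ball]
    rw [hPB]; exact htd)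
  -- the key inequality from the Dirichlet domain, with permutation σ
  have hkey : dist P A ≤ dist P (σ • A) := hPdom σ
  rw [Subtype.dist_eq, Subtype.dist_eq] at hkey
  have hsaval : (σ • A).1 = sa := rfl
  rw [hsaval] at hkey
  -- rewrite in vector form
  set v : Mat l m := b - a with hv
  set w : Mat l m := b - sa with hw
  have hvnorm : ‖v‖ = d := by rw [hv, ← dist_eq_norm]
  have hwnorm : ‖w‖ = d := by rw [hw, ← dist_eq_norm]; exact hdist_b_sa
  have hPa : (1 - t) • b + t • sa - a = v - t • w := by rw [hv, hw]; module
  have hPsa : (1 - t) • b + t • sa - sa = (1 - t) • w := by rw [hw]; module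
  have hkey2 : ‖v - t • w‖ ≤ (1 - t) * d := by
    have : dist ((1 - t) • b + t • sa : Mat l m) a = ‖v - t • w‖ := by
      rw [dist_eq_norm, hPa]
    rw [this] at hkey
    have : dist ((1 - t) • b + t • sa : Mat l m) sa = (1 - t) * d := by
      rw [dist_eq_norm, hPsa, norm_smul, Real.norm_eq_abs,
        abs_of_nonneg (by linarith), hwnorm]
    rw [this] at hkey
    exact hkey
  -- expand squared norms to get ⟪v, w⟫ ≥ d ^ 2
  have hsq : ‖v - t • w‖ ^ 2 ≤ ((1 - t) * d) ^ 2 := by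
    have h1 : (0:ℝ) ≤ ‖v - t • w‖ := norm_nonneg _
    nlinarith
  have hexp : ‖v - t • w‖ ^ 2
      = d ^ 2 - 2 * t * (inner ℝ v w : ℝ) + t ^ 2 * d ^ 2 := by
    rw [norm_sub_sq_real, norm_smul, real_inner_smul_right, hvnorm,
      Real.norm_eq_abs, abs_of_pos ht0, hwnorm, mul_pow]
    ring
  have hinner_ge : (d:ℝ) ^ 2 ≤ (inner ℝ v w : ℝ) := by nlinarith [hsq, hexp]
  have hinner_le : (inner ℝ v w : ℝ) ≤ d ^ 2 := by
    have := real_inner_le_norm v w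
    rw [hvnorm, hwnorm] at this
    nlinarith
  -- v = w
  have hvw : ‖v - w‖ ^ 2 ≤ 0 := by
    have : ‖v - w‖ ^ 2 = d ^ 2 - 2 * (inner ℝ v w : ℝ) + d ^ 2 := by
      rw [norm_sub_sq_real, hvnorm, hwnorm]
    nlinarith
  have hvweq : v = w := by
    have : ‖v - w‖ = 0 := by
      have h1 : (0:ℝ) ≤ ‖v - w‖ := norm_nonneg _
      nlinarith
    have := norm_eq_zero.mp this
    exact sub_eq_zero.mp this
  -- hence σ • A = A, contradiction
  have hasa : a = sa := by
    have h : b - a = b - sa := by rw [← hv, ← hw, hvweq]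
    have := congrArg (fun x => b - x) (sub_right_injective h)
    exact sub_right_injective h
  exact hA σ hσ (Subtype.ext (by rw [hsaval, ← hasa]))

end
end
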